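/- Let α > 0, let J = I₄/4 + α σ_z ⊗ σ_z (a 4×4 Hermitian matrix), and suppose r = 1/4 − α. Then there exist no finite probability distribution {p_i} and matrices X_i ∈ SL(2,ℂ) such that Σ_i p_i (X_i ⊗ X_i)† J (X_i ⊗ X_i) = r·I₄. -/

import Mathlib

open Matrix Kronecker

def sigmaZ : Matrix (Fin 2) (Fin 2) ℂ := !![1, 0; 0, -1]

private noncomputable def tval (α : ℝ) (X : Matrix (Fin 2) (Fin 2) ℂ) : ℝ :=
  (1/4) * ((Complex.normSq (X 0 0) + Complex.normSq (X 0 1))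
        + (Complex.normSq (X 1 0) + Complex.normSq (X 1 1)))^2
      + α * ((Complex.normSq (X 0 0) + Complex.normSq (X 0 1))
        - (Complex.normSq (X 1 0) + Complex.normSq (X 1 1)))^2

private lemma trace_term (α : ℝ) (X : Matrix (Fin 2) (Fin 2) ℂ) :
    Matrix.trace ((X ⊗ₖ X)ᴴ * ((1 / 4 : ℂ) • (1 : Matrix (Fin 2 × Fin 2) (Fin 2 × Fin 2) ℂ)
        + (α : ℂ) • (sigmaZ ⊗ₖ sigmaZ)) * (X ⊗ₖ X)) = ((tval α X : ℝ) : ℂ) := by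
  unfold tval
  simp only [Matrix.trace, Matrix.diag, Matrix.mul_apply, Fintype.sum_prod_type,
    Fin.sum_univ_two, Matrix.conjTranspose_apply, Matrix.add_apply, Matrix.smul_apply,
    Matrix.one_apply, kroneckerMap_apply, sigmaZ, Matrix.cons_val', Matrix.cons_val_zero,
    Matrix.cons_val_one, Matrix.head_cons, Matrix.head_fin_const, Matrix.empty_val',
    Matrix.cons_val_fin_one, Complex.normSq_apply, Complex.ext_iff, Complex.ofReal_re,
    Complex.ofReal_im]
  constructor <;> · simp [Complex.add_re, Complex.add_im, Complex.mul_re, Complex.mul_im,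
    Complex.conj_re, Complex.conj_im, Complex.ofReal_re, Complex.ofReal_im, smul_eq_mul,
    Prod.ext_iff] <;> ring

private lemma det_bound (X : Matrix (Fin 2) (Fin 2) ℂ) (h : X.det = 1) :
    2 ≤ (Complex.normSq (X 0 0) + Complex.normSq (X 0 1))
      + (Complex.normSq (X 1 0) + Complex.normSq (X 1 1)) := by
  rw [Matrix.det_fin_two] at h
  have h1 : ‖X 0 0 * X 1 1 - X 0 1 * X 1 0‖ = 1 := by rw [h]; simp
  have h2 : ‖X 0 0 * X 1 1 - X 0 1 * X 1 0‖
      ≤ ‖X 0 0‖ * ‖X 1 1‖ + ‖X 0 1‖ * ‖X 1 0‖ := by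
    calc ‖X 0 0 * X 1 1 - X 0 1 * X 1 0‖
        ≤ ‖X 0 0 * X 1 1‖ + ‖X 0 1 * X 1 0‖ :=
          norm_sub_le _ _
      _ = _ := by rw [norm_mul, norm_mul]
  have e : ∀ z : ℂ, Complex.normSq z = ‖z‖^2 := fun z => (Complex.sq_norm z).symm
  rw [e, e, e, e]
  have n0 := norm_nonneg (X 0 0)
  have n1 := norm_nonneg (X 0 1)
  have n2 := norm_nonneg (X 1 0)
  have n3 := norm_nonneg (X 1 1)
  nlinarith [sq_nonneg (‖X 0 0‖ - ‖X 1 1‖),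
    sq_nonneg (‖X 0 1‖ - ‖X 1 0‖)]

private lemma tval_ge_one (α : ℝ) (hα : 0 < α) (X : Matrix (Fin 2) (Fin 2) ℂ)
    (h : X.det = 1) : 1 ≤ tval α X := by
  have hb := det_bound X h
  unfold tval
  nlinarith [sq_nonneg ((Complex.normSq (X 0 0) + Complex.normSq (X 0 1))
        - (Complex.normSq (X 1 0) + Complex.normSq (X 1 1)))]

theorem stmt_5 (α : ℝ) (hα : 0 < α)
    (J : Matrix (Fin 2 × Fin 2) (Fin 2 × Fin 2) ℂ)
    (hJ : J = (1 / 4 : ℂ) • (1 : Matrix (Fin 2 × Fin 2) (Fin 2 × Fin 2) ℂ)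
        + (α : ℂ) • (sigmaZ ⊗ₖ sigmaZ))
    (r : ℝ) (hr : r = 1 / 4 - α) :
    ¬ ∃ (n : ℕ) (p : Fin n → ℝ) (X : Fin n → Matrix (Fin 2) (Fin 2) ℂ),
        (∀ i, 0 ≤ p i) ∧ (∑ i, p i = 1) ∧ (∀ i, (X i).det = 1) ∧
        (∑ i, (p i : ℂ) • ((X i ⊗ₖ X i)ᴴ * J * (X i ⊗ₖ X i)))
          = (r : ℂ) • (1 : Matrix (Fin 2 × Fin 2) (Fin 2 × Fin 2) ℂ) := by
  rintro ⟨n, p, X, hp, hsum, hdet, heq⟩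
  have htr := congrArg Matrix.trace heq
  rw [Matrix.trace_sum, Matrix.trace_smul] at htr
  simp only [Matrix.trace_smul] at htr
  have htr1 : Matrix.trace (1 : Matrix (Fin 2 × Fin 2) (Fin 2 × Fin 2) ℂ) = 4 := by
    simp [Matrix.trace, Matrix.diag, Fintype.sum_prod_type, Fin.sum_univ_two]
  rw [htr1] at htr
  have hterm : ∀ i, Matrix.trace ((X i ⊗ₖ X i)ᴴ * J * (X i ⊗ₖ X i))
      = ((tval α (X i) : ℝ) : ℂ) := fun i => by rw [hJ]; exact trace_term α (X i)
  simp only [hterm, smul_eq_mul] at htr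
  have hreal : (∑ i, p i * tval α (X i)) = r * 4 := by
    have : ((∑ i, p i * tval α (X i) : ℝ) : ℂ) = ((r * 4 : ℝ) : ℂ) := by
      push_cast
      simpa using htr
    exact_mod_cast this
  have hge : (1 : ℝ) ≤ ∑ i, p i * tval α (X i) := by
    calc (1 : ℝ) = ∑ i, p i := hsum.symm
      _ ≤ ∑ i, p i * tval α (X i) := by
          apply Finset.sum_le_sum
          intro i _
          have := tval_ge_one α hα (X i) (hdet i)
          nlinarith [hp i]
  rw [hreal, hr] at hge
  linarith
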